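/- arXiv:1904.04107 — 8 statements merged into one kernel-verified Lean document; each statement's English description precedes it below -/
import Mathlib

section
/- A T0 topological space X is T1 if and only if X has a closed network, i.e., a collection 𝒩 of closed subsets of X such that for every point x and every open set U containing x there exists N ∈ 𝒩 with x ∈ N ⊆ U. -/
/-- A T0 space is T1 iff it has a closed network. -/
theorem t1_iff_exists_closed_network {X : Type*} [TopologicalSpace X] [T0Space X] :
    T1Space X ↔
      ∃ 𝒩 : Set (Set X), (∀ N ∈ 𝒩, IsClosed N) ∧
        ∀ (x : X) (U : Set X), IsOpen U → x ∈ U → ∃ N ∈ 𝒩, x ∈ N ∧ N ⊆ U := by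
  constructor
  · intro h
    refine ⟨Set.range (fun x : X => {x}), ?_, ?_⟩
    · rintro N ⟨x, rfl⟩; exact isClosed_singleton
    · intro x U _ hx
      exact ⟨{x}, ⟨x, rfl⟩, rfl, Set.singleton_subset_iff.mpr hx⟩
  · rintro ⟨𝒩, hcl, hnet⟩
    refine ⟨fun x => ?_⟩
    rw [← isOpen_compl_iff, isOpen_iff_forall_mem_open]
    intro y hy
    have hxy : y ≠ x := hy
    rcases exists_isOpen_xor'_mem hxy with ⟨U, hU, hxor⟩
    rcases hxor with ⟨hyU, hxU⟩ | ⟨hxU, hyU⟩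
    · exact ⟨U, fun z hz hzx => hxU (hzx ▸ hz), hU, hyU⟩
    · rcases hnet x U hU hxU with ⟨N, hN, hxN, hNU⟩
      exact ⟨Nᶜ, fun z hz hzx => hz (hzx ▸ hxN), (hcl N hN).isOpen_compl,
        fun h => hyU (hNU h)⟩
end

section
/- A second-countable topological space X is a G_δ-space (i.e., every closed subset of X is a countable intersection of open sets) if and only if X has a countable closed network. -/
/-- A second-countable space is a `G_δ`-space iff it has a countable closed network. -/
theorem gdeltaSpace_iff_countable_closed_network {X : Type*} [TopologicalSpace X]
    [SecondCountableTopology X] :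
    (∀ C : Set X, IsClosed C → IsGδ C) ↔
      ∃ 𝒩 : Set (Set X), 𝒩.Countable ∧ (∀ N ∈ 𝒩, IsClosed N) ∧
        ∀ (x : X) (U : Set X), IsOpen U → x ∈ U → ∃ N ∈ 𝒩, x ∈ N ∧ N ⊆ U := by
  constructor
  · intro h
    obtain ⟨b, hbc, -, hb⟩ := TopologicalSpace.exists_countable_basis X
    -- for each s in b, sᶜ is closed hence Gδ; choose the family
    have key : ∀ s ∈ b, ∃ T : Set (Set X), (∀ t ∈ T, IsOpen t) ∧ T.Countable ∧ sᶜ = ⋂₀ T := by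
      intro s hs
      exact h sᶜ (hb.isOpen hs).isClosed_compl
    choose! T hTopen hTc hTint using key
    refine ⟨⋃ s ∈ b, compl '' T s, ?_, ?_, ?_⟩
    · exact hbc.biUnion fun s hs => ((hTc s hs).image _)
    · rintro N hN
      simp only [Set.mem_iUnion] at hN
      obtain ⟨s, hs, t, ht, rfl⟩ := hN
      exact (hTopen s hs t ht).isClosed_compl
    · intro x U hU hxU
      obtain ⟨s, hs, hxs, hsU⟩ := hb.exists_subset_of_mem_open hxU hU
      have hxc : x ∉ sᶜ := fun hx => hx hxs
      rw [hTint s hs] at hxc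
      simp only [Set.mem_sInter, not_forall] at hxc
      obtain ⟨t, ht, hxt⟩ := hxc
      refine ⟨tᶜ, ?_, hxt, ?_⟩
      · exact Set.mem_iUnion.2 ⟨s, Set.mem_iUnion.2 ⟨hs, Set.mem_image_of_mem _ ht⟩⟩
      · intro y hy
        by_contra hys
        have : y ∈ sᶜ := fun h' => hys (hsU h')
        rw [hTint s hs] at this
        exact hy (this t ht)
  · rintro ⟨𝒩, hc, hcl, hnet⟩ C hC
    refine ⟨compl '' {N | N ∈ 𝒩 ∧ N ⊆ Cᶜ}, ?_, ?_, ?_⟩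
    · rintro t ⟨N, ⟨hN, -⟩, rfl⟩
      exact (hcl N hN).isOpen_compl
    · exact (hc.mono (Set.sep_subset _ _)).image _
    · ext x
      simp only [Set.mem_sInter, Set.mem_image, Set.mem_setOf_eq]
      constructor
      · rintro hxC t ⟨N, ⟨hN, hNC⟩, rfl⟩ 
        exact fun hxN => hNC hxN hxC
      · intro hx
        by_contra hxC
        obtain ⟨N, hN, hxN, hNC⟩ := hnet x Cᶜ hC.isOpen_compl hxC
        exact hx Nᶜ ⟨N, ⟨hN, hNC⟩, rfl⟩ hxN
end

section
/- Every T0 topological space in which every closed set is a G_δ set is T1. -/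
/-- Every T0 space in which every closed set is `G_δ` is T1. -/
theorem t1Space_of_t0_of_closed_isGδ {X : Type*} [TopologicalSpace X] [T0Space X]
    (h : ∀ C : Set X, IsClosed C → IsGδ C) : T1Space X := by
  rw [t1Space_iff_specializes_imp_eq]
  intro x y hxy
  by_contra hne
  -- `hxy : x ⤳ y`, so `y ∉ closure {x}` would be false; by T0, `¬ y ⤳ x`.
  have hyx : ¬ y ⤳ x := fun h' => hne ((hxy.antisymm h').eq)
  -- x ∉ closure {y}
  have hxcl : x ∉ closure ({y} : Set X) := by
    exact fun hc => hyx (specializes_iff_mem_closure.mpr hc)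
  obtain ⟨T, hTopen, hTcount, hEq⟩ := (h (closure {y}) isClosed_closure)
  rw [hEq, Set.mem_sInter] at hxcl
  push_neg at hxcl
  obtain ⟨U, hU, hxU⟩ := hxcl
  have hyU : y ∈ U := by
    have : y ∈ closure ({y} : Set X) := subset_closure rfl
    rw [hEq] at this
    exact this U hU
  -- x ⤳ y : every open set containing y contains x
  exact hxU (hxy.mem_open (hTopen U hU) hyU)
end

section
/- Let X be a T2.5 (Urysohn) space, let x, y ∈ X, and let ℳ be a family of subsets of X that is simultaneously a network at x and a network at y, and such that for all M, N ∈ ℳ the closures cl(M) and cl(N) intersect. Then x = y. -/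
/-- In a T2.5 (Urysohn) space, if `ℳ` is a network at both `x` and `y` and the closures of any
two members of `ℳ` intersect, then `x = y`. -/
theorem eq_of_common_network_t25 {X : Type*} [TopologicalSpace X] [T25Space X]
    (x y : X) (ℳ : Set (Set X))
    (hx : ∀ U : Set X, IsOpen U → x ∈ U → ∃ M ∈ ℳ, x ∈ M ∧ M ⊆ U)
    (hy : ∀ U : Set X, IsOpen U → y ∈ U → ∃ M ∈ ℳ, y ∈ M ∧ M ⊆ U)
    (hmeet : ∀ M ∈ ℳ, ∀ N ∈ ℳ, (closure M ∩ closure N).Nonempty) :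
    x = y := by
  by_contra h
  obtain ⟨u, hxu, hu, v, hyv, hv, hdisj⟩ := exists_open_nhds_disjoint_closure h
  obtain ⟨M, hM, -, hMu⟩ := hx u hu hxu
  obtain ⟨N, hN, -, hNv⟩ := hy v hv hyv
  obtain ⟨z, hz1, hz2⟩ := hmeet M hM N hN
  exact hdisj.ne_of_mem (closure_mono hMu hz1) (closure_mono hNv hz2) rfl
end

section
/- In the Golomb topology on the positive integers (the relatively prime integer topology), for all positive integers a, b with gcd(a,b) = 1, every positive multiple of b lies in the closure of the arithmetic progression {a + b·n : n ∈ ℤ} ∩ ℤ⁺. That is, b·ℤ⁺ ⊆ cl({a + b·n : n ∈ ℤ, a + b·n > 0}). -/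
/-- The subbasis (indeed basis) of the Golomb (relatively prime integer) topology on `ℕ+`:
arithmetic progressions `(a + bℤ) ∩ ℤ⁺` with `gcd(a,b) = 1`. -/
def golombSubbasis : Set (Set ℕ+) :=
  {S | ∃ a b : ℕ+, Nat.Coprime (a : ℕ) (b : ℕ) ∧
    S = {x : ℕ+ | ((b : ℕ) : ℤ) ∣ (((x : ℕ) : ℤ) - ((a : ℕ) : ℤ))}}

/-- The Golomb topology on the positive integers. -/
def golombTopology : TopologicalSpace ℕ+ :=
  TopologicalSpace.generateFrom golombSubbasis

/-- Every open set containing `x` contains a basic progression `x + cℤ` with `gcd(x,c)=1`. -/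
lemma golomb_open_contains (x : ℕ+) (U : Set ℕ+)
    (hU : TopologicalSpace.GenerateOpen golombSubbasis U) (hxU : x ∈ U) :
    ∃ c : ℕ+, Nat.Coprime (x : ℕ) (c : ℕ) ∧
      {y : ℕ+ | ((c : ℕ) : ℤ) ∣ (((y : ℕ) : ℤ) - ((x : ℕ) : ℤ))} ⊆ U := by
  induction hU with
  | basic S hS =>
      obtain ⟨a', c, hac, rfl⟩ := hS
      have hx := hxU
      refine ⟨c, ?_, ?_⟩
      · -- x ≡ a' mod c, gcd(a',c)=1 ⇒ gcd(x,c)=1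
        have hx' : ((c : ℕ) : ℤ) ∣ (((x : ℕ) : ℤ) - ((a' : ℕ) : ℤ)) := hx
        set d : ℕ := Nat.gcd (x : ℕ) (c : ℕ) with hd
        have hdx : (d : ℤ) ∣ ((x : ℕ) : ℤ) := Int.natCast_dvd_natCast.mpr (Nat.gcd_dvd_left _ _)
        have hdc : (d : ℤ) ∣ ((c : ℕ) : ℤ) := Int.natCast_dvd_natCast.mpr (Nat.gcd_dvd_right _ _)
        have hda' : (d : ℤ) ∣ ((a' : ℕ) : ℤ) := by
          have h := dvd_sub hdx (hdc.trans hx')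
          simpa using h
        have hda'n : d ∣ (a' : ℕ) := Int.natCast_dvd_natCast.mp hda'
        have : d ∣ 1 := hac ▸ Nat.dvd_gcd hda'n (Nat.gcd_dvd_right _ _)
        exact Nat.dvd_one.mp this
      · intro y hy
        simp only [Set.mem_setOf_eq] at hy ⊢
        have hx' : ((c : ℕ) : ℤ) ∣ (((x : ℕ) : ℤ) - ((a' : ℕ) : ℤ)) := hx
        have := dvd_add hy hx'
        simpa using this
  | univ => exact ⟨1, Nat.coprime_one_right _, fun _ _ => trivial⟩
  | inter S T _ _ ihS ihT =>
      obtain ⟨c₁, h₁, hs₁⟩ := ihS hxU.1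
      obtain ⟨c₂, h₂, hs₂⟩ := ihT hxU.2
      refine ⟨c₁ * c₂, ?_, ?_⟩
      · simpa using Nat.Coprime.mul_right h₁ h₂
      · intro y hy
        simp only [Set.mem_setOf_eq, PNat.mul_coe, Nat.cast_mul] at hy
        exact ⟨hs₁ (dvd_of_mul_right_dvd hy), hs₂ (dvd_of_mul_left_dvd hy)⟩
  | sUnion 𝒮 _ ih =>
      obtain ⟨S, hS, hxS⟩ := hxU
      obtain ⟨c, hc, hsub⟩ := ih S hS hxS
      exact ⟨c, hc, fun y hy => ⟨S, hS, hsub hy⟩⟩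

/-- In the Golomb topology, every positive multiple of `b` lies in the closure of the
arithmetic progression `(a + bℤ) ∩ ℤ⁺`, when `gcd(a,b) = 1`. -/
theorem golomb_multiple_mem_closure_progression (a b : ℕ+)
    (hab : Nat.Coprime (a : ℕ) (b : ℕ)) (x : ℕ+) (hx : (b : ℕ) ∣ (x : ℕ)) :
    x ∈ @closure ℕ+ golombTopology
      {y : ℕ+ | ((b : ℕ) : ℤ) ∣ (((y : ℕ) : ℤ) - ((a : ℕ) : ℤ))} := by
  letI : TopologicalSpace ℕ+ := golombTopology
  rw [mem_closure_iff]
  intro U hU hxU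
  obtain ⟨c, hxc, hsub⟩ := golomb_open_contains x U hU hxU
  -- gcd(b,c) = 1 since b ∣ x and gcd(x,c)=1
  have hbc : Nat.Coprime (b : ℕ) (c : ℕ) := Nat.Coprime.coprime_dvd_left hx hxc
  -- Bezout: u*b + v*c = 1
  have hcop : IsCoprime ((b : ℕ) : ℤ) ((c : ℕ) : ℤ) := by
    rw [Int.isCoprime_iff_gcd_eq_one, Int.gcd_natCast_natCast]
    exact hbc
  obtain ⟨u, v, huv⟩ := hcop
  set z : ℤ := ((a : ℕ) : ℤ) * v * ((c : ℕ) : ℤ) + ((x : ℕ) : ℤ) * u * ((b : ℕ) : ℤ) with hz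
  have hzb : ((b : ℕ) : ℤ) ∣ z - ((a : ℕ) : ℤ) := by
    have : z - ((a : ℕ) : ℤ) = (((x : ℕ) : ℤ) - ((a : ℕ) : ℤ)) * u * ((b : ℕ) : ℤ) := by
      rw [hz]; linear_combination ((a : ℕ) : ℤ) * huv
    rw [this]; exact Dvd.intro_left _ rfl
  have hzc : ((c : ℕ) : ℤ) ∣ z - ((x : ℕ) : ℤ) := by
    have : z - ((x : ℕ) : ℤ) = (((a : ℕ) : ℤ) - ((x : ℕ) : ℤ)) * v * ((c : ℕ) : ℤ) := by
      rw [hz]; linear_combination ((x : ℕ) : ℤ) * huv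
    rw [this]; exact Dvd.intro_left _ rfl
  -- shift z to be positive
  set N : ℤ := ((b : ℕ) : ℤ) * ((c : ℕ) : ℤ) with hN
  have hNpos : 0 < N := by positivity
  set w : ℤ := z + (z.natAbs + 1) * N with hw
  have hwpos : 0 < w := by
    have h1 : -(z.natAbs : ℤ) ≤ z := neg_abs_le z |>.trans_eq' (by rw [Int.abs_eq_natAbs])
    have h2 : (z.natAbs + 1 : ℤ) * 1 ≤ (z.natAbs + 1) * N := by
      apply mul_le_mul_of_nonneg_left hNpos (by positivity)
    push_cast at h2 ⊢
    nlinarith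
  set y : ℕ+ := ⟨w.toNat, by omega⟩ with hy
  have hyw : ((y : ℕ) : ℤ) = w := by
    simp [hy, Int.toNat_of_nonneg hwpos.le]
  refine ⟨y, hsub ?_, ?_⟩
  · show ((c : ℕ) : ℤ) ∣ ((y : ℕ) : ℤ) - ((x : ℕ) : ℤ)
    rw [hyw, hw]
    have : z + (↑z.natAbs + 1) * N - ((x : ℕ) : ℤ)
        = (z - ((x : ℕ) : ℤ)) + (↑z.natAbs + 1) * (((b : ℕ) : ℤ) * ((c : ℕ) : ℤ)) := by
      rw [hN]; ring
    rw [this]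
    exact dvd_add hzc ⟨(↑z.natAbs + 1) * ((b : ℕ) : ℤ), by ring⟩
  · show ((b : ℕ) : ℤ) ∣ ((y : ℕ) : ℤ) - ((a : ℕ) : ℤ)
    rw [hyw, hw]
    have : z + (↑z.natAbs + 1) * N - ((a : ℕ) : ℤ)
        = (z - ((a : ℕ) : ℤ)) + (↑z.natAbs + 1) * (((b : ℕ) : ℤ) * ((c : ℕ) : ℤ)) := by
      rw [hN]; ring
    rw [this]
    exact dvd_add hzb ⟨(↑z.natAbs + 1) * ((c : ℕ) : ℤ), by ring⟩
end

section
/- The Golomb space is nowhere T2.5: for any two nonempty open sets U and V in the relatively prime integer topology on the positive integers, cl(U) ∩ cl(V) ≠ ∅. In particular, the Golomb space is not a T2.5 (Urysohn) space. -/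
/-- CRT for two coprime moduli, with a positive solution. -/
lemma golomb_crt (a b e f : ℤ) (hb : 0 < b) (hf : 0 < f) (h : IsCoprime b f) :
    ∃ y : ℤ, 0 < y ∧ b ∣ y - a ∧ f ∣ y - e := by
  obtain ⟨u, v, huv⟩ := h
  set y0 : ℤ := e * (u * b) + a * (v * f) with hy0
  have hby : b ∣ y0 - a := by
    have : y0 - a = b * (e * u) + a * (v * f - 1) := by ring
    rw [this]
    have : v * f - 1 = -(u * b) := by linarith
    rw [this]
    exact dvd_add (Dvd.intro _ rfl) ⟨-(a * u), by ring⟩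
  have hfy : f ∣ y0 - e := by
    have : y0 - e = f * (a * v) + e * (u * b - 1) := by ring
    rw [this]
    have : u * b - 1 = -(v * f) := by linarith
    rw [this]
    exact dvd_add (Dvd.intro _ rfl) ⟨-(e * v), by ring⟩
  refine ⟨y0 + (|y0| + 1) * (b * f), ?_, ?_, ?_⟩
  · have h1 : 1 ≤ b * f := by
      have h := mul_pos hb hf
      simpa using Int.add_one_le_iff.mpr h
    have h2 : (|y0| + 1) * 1 ≤ (|y0| + 1) * (b * f) :=
      mul_le_mul_of_nonneg_left h1 (by positivity)
    have h3 : -y0 ≤ |y0| := neg_le_abs y0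
    linarith
  · have : y0 + (|y0| + 1) * (b * f) - a = (y0 - a) + b * ((|y0| + 1) * f) := by ring
    rw [this]; exact dvd_add hby (Dvd.intro _ rfl)
  · have : y0 + (|y0| + 1) * (b * f) - e = (y0 - e) + f * ((|y0| + 1) * b) := by ring
    rw [this]; exact dvd_add hfy (Dvd.intro _ rfl)

lemma golomb_basis :
    @TopologicalSpace.IsTopologicalBasis ℕ+ golombTopology golombSubbasis := by
  letI := golombTopology
  refine ⟨?_, ?_, rfl⟩
  · rintro t₁ ⟨a, b, hab, rfl⟩ t₂ ⟨c, d, hcd, rfl⟩ x ⟨hx1, hx2⟩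
    simp only [Set.mem_setOf_eq] at hx1 hx2
    have hxb : Nat.Coprime (x : ℕ) (b : ℕ) := by
      rw [← Nat.isCoprime_iff_coprime]
      obtain ⟨k, hk⟩ := hx1
      have : ((x : ℕ) : ℤ) = ((a : ℕ) : ℤ) + ((b : ℕ) : ℤ) * k := by linarith
      rw [this]
      exact (hab.isCoprime).add_mul_left_left k
    have hxd : Nat.Coprime (x : ℕ) (d : ℕ) := by
      rw [← Nat.isCoprime_iff_coprime]
      obtain ⟨k, hk⟩ := hx2
      have : ((x : ℕ) : ℤ) = ((c : ℕ) : ℤ) + ((d : ℕ) : ℤ) * k := by linarith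
      rw [this]
      exact (hcd.isCoprime).add_mul_left_left k
    refine ⟨{y : ℕ+ | (((b * d : ℕ+) : ℕ) : ℤ) ∣ (((y : ℕ) : ℤ) - ((x : ℕ) : ℤ))},
      ⟨x, b * d, ?_, rfl⟩, ?_, ?_⟩
    · simpa using hxb.mul_right hxd
    · simp
    · rintro y hy
      simp only [Set.mem_setOf_eq, PNat.mul_coe, Nat.cast_mul] at hy ⊢
      constructor
      · have h1 : ((b : ℕ) : ℤ) ∣ ((y : ℕ) : ℤ) - ((x : ℕ) : ℤ) :=
          dvd_trans (Dvd.intro _ rfl) hy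
        have := dvd_add h1 hx1
        simpa using this
      · have h1 : ((d : ℕ) : ℤ) ∣ ((y : ℕ) : ℤ) - ((x : ℕ) : ℤ) :=
          dvd_trans (Dvd.intro_left _ rfl) hy
        have := dvd_add h1 hx2
        simpa using this
  · apply Set.eq_univ_of_forall
    intro x
    refine Set.mem_sUnion.2 ⟨{y : ℕ+ | (((1 : ℕ+) : ℕ) : ℤ) ∣ (((y : ℕ) : ℤ) - ((x : ℕ) : ℤ))}, ⟨x, 1, ?_, by norm_num⟩, by simp⟩
    simp [Nat.Coprime]

/-- Every positive multiple of `b` is in the closure of the basic set (a, b). -/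
lemma golomb_mem_closure (a b : ℕ+) (hab : Nat.Coprime (a : ℕ) (b : ℕ)) (p : ℕ+)
    (hp : ((b : ℕ) : ℤ) ∣ ((p : ℕ) : ℤ)) :
    p ∈ @closure ℕ+ golombTopology {x : ℕ+ | ((b : ℕ) : ℤ) ∣ (((x : ℕ) : ℤ) - ((a : ℕ) : ℤ))} := by
  letI := golombTopology
  rw [golomb_basis.mem_closure_iff]
  rintro t ⟨e, f, hef, rfl⟩ hpt
  simp only [Set.mem_setOf_eq] at hpt
  -- f is coprime to p, hence to b
  have hfp : IsCoprime ((f : ℕ) : ℤ) ((p : ℕ) : ℤ) := by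
    obtain ⟨k, hk⟩ := hpt
    have : ((p : ℕ) : ℤ) = ((e : ℕ) : ℤ) + ((f : ℕ) : ℤ) * k := by linarith
    rw [this]
    exact ((hef.isCoprime).symm.add_mul_left_right k)
  have hbf : IsCoprime ((b : ℕ) : ℤ) ((f : ℕ) : ℤ) :=
    (hfp.of_isCoprime_of_dvd_right hp).symm
  obtain ⟨y, hy0, hyb, hyf⟩ := golomb_crt ((a : ℕ) : ℤ) ((b : ℕ) : ℤ) ((e : ℕ) : ℤ) ((f : ℕ) : ℤ)
    (by exact_mod_cast b.pos) (by exact_mod_cast f.pos) hbf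
  lift y to ℕ using hy0.le with n hn
  refine ⟨⟨n, by exact_mod_cast hy0⟩, ?_, ?_⟩ <;> simpa using ‹_›

/-- The Golomb space is nowhere T2.5: any two nonempty open sets have intersecting closures.
In particular it is not a T2.5 (Urysohn) space. -/
theorem golomb_nowhere_t25 :
    (∀ U V : Set ℕ+, @IsOpen ℕ+ golombTopology U → @IsOpen ℕ+ golombTopology V →
      U.Nonempty → V.Nonempty →
      (@closure ℕ+ golombTopology U ∩ @closure ℕ+ golombTopology V).Nonempty) ∧
    ¬ @T25Space ℕ+ golombTopology := by
  letI := golombTopology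
  have main : ∀ U V : Set ℕ+, IsOpen U → IsOpen V → U.Nonempty → V.Nonempty →
      (closure U ∩ closure V).Nonempty := by
    intro U V hU hV ⟨x, hx⟩ ⟨z, hz⟩
    obtain ⟨t1, ⟨a, b, hab, rfl⟩, hxt1, ht1U⟩ := golomb_basis.exists_subset_of_mem_open hx hU
    obtain ⟨t2, ⟨c, d, hcd, rfl⟩, hzt2, ht2V⟩ := golomb_basis.exists_subset_of_mem_open hz hV
    refine ⟨b * d, ?_, ?_⟩
    · exact closure_mono ht1U (golomb_mem_closure a b hab (b * d) (by simp))
    · exact closure_mono ht2V (golomb_mem_closure c d hcd (b * d) ⟨(b : ℤ), by push_cast; ring⟩)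
  refine ⟨main, ?_⟩
  intro hT
  have h12 : (1 : ℕ+) ≠ 2 := by decide
  have hd := hT.t2_5 h12
  rw [Filter.disjoint_iff] at hd
  obtain ⟨s, hs, t, ht, hst⟩ := hd
  rw [Filter.mem_lift'_sets (monotone_closure ℕ+)] at hs ht
  obtain ⟨u, hu, hus⟩ := hs
  obtain ⟨v, hv, hvt⟩ := ht
  have h1 : (closure (interior u) ∩ closure (interior v)).Nonempty :=
    main _ _ isOpen_interior isOpen_interior ⟨1, mem_interior_iff_mem_nhds.2 hu⟩
      ⟨2, mem_interior_iff_mem_nhds.2 hv⟩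
  obtain ⟨w, hw1, hw2⟩ := h1
  exact hst.ne_of_mem (hus (closure_mono interior_subset hw1))
    (hvt (closure_mono interior_subset hw2)) rfl
end

section
/- Let τ' be the topology on ℝ generated by the standard Euclidean topology together with the single additional open set J = ℝ ∖ ℚ (the irrationals). Then ℚ is a closed set in (ℝ, τ') that is not a G_δ set in (ℝ, τ'). Consequently, (ℝ, τ') is a second-countable, submetrizable space that is not a G_δ-space. -/
open TopologicalSpace Set

/-- The indiscrete irrational extension of `ℝ`: the topology generated by the Euclidean
topology together with the set of irrationals as a new open set. -/
def irrExtTopology : TopologicalSpace ℝ :=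
  TopologicalSpace.generateFrom (insert {x : ℝ | Irrational x} {U : Set ℝ | IsOpen U})

/-- Structure lemma: any set open in the generated topology contains a Euclidean-open set
covering its rational part. -/
lemma irrExt_open_struct {W : Set ℝ}
    (hW : TopologicalSpace.GenerateOpen
      (insert {x : ℝ | Irrational x} {U : Set ℝ | IsOpen U}) W) :
    ∃ U : Set ℝ, IsOpen U ∧ U ⊆ W ∧ W ⊆ U ∪ {x : ℝ | Irrational x} := by
  induction hW with
  | basic s hs =>
    rcases hs with rfl | hs
    · exact ⟨∅, isOpen_empty, empty_subset _, by simp⟩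
    · exact ⟨s, hs, subset_rfl, subset_union_left⟩
  | univ => exact ⟨univ, isOpen_univ, subset_rfl, subset_union_left⟩
  | inter s t _ _ ihs iht =>
    obtain ⟨U, hU, hUs, hsU⟩ := ihs
    obtain ⟨V, hV, hVt, htV⟩ := iht
    refine ⟨U ∩ V, hU.inter hV, inter_subset_inter hUs hVt, ?_⟩
    rintro x ⟨hxs, hxt⟩
    rcases hsU hxs with h | h
    · rcases htV hxt with h' | h'
      · exact Or.inl ⟨h, h'⟩
      · exact Or.inr h'
    · exact Or.inr h
  | sUnion S _ ih =>
    choose U hUo hU₁ hU₂ using ih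
    refine ⟨⋃ (s : Set ℝ) (h : s ∈ S), U s h, isOpen_iUnion fun s => isOpen_iUnion fun h => hUo s h,
      ?_, ?_⟩
    · exact iUnion_subset fun s => iUnion_subset fun h => (hU₁ s h).trans (subset_sUnion_of_mem h)
    · rintro x ⟨s, hsS, hxs⟩
      rcases hU₂ s hsS hxs with h | h
      · exact Or.inl (mem_iUnion.2 ⟨s, mem_iUnion.2 ⟨hsS, h⟩⟩)
      · exact Or.inr h

lemma irrExtTopology_eq_countable :
    irrExtTopology = TopologicalSpace.generateFrom
      (insert {x : ℝ | Irrational x} (⋃ (a : ℚ) (b : ℚ) (_ : a < b), {Ioo (a : ℝ) b})) := by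
  refine le_antisymm ?_ ?_
  · apply TopologicalSpace.generateFrom_anti
    rintro s (rfl | hs)
    · exact Or.inl rfl
    · simp only [mem_iUnion, mem_singleton_iff] at hs
      obtain ⟨a, b, _, rfl⟩ := hs
      exact Or.inr (mem_setOf.2 isOpen_Ioo)
  · apply le_generateFrom
    rintro s (rfl | hs)
    · exact TopologicalSpace.GenerateOpen.basic _ (Or.inl rfl)
    · obtain ⟨S, hS, rfl⟩ := Real.isTopologicalBasis_Ioo_rat.open_eq_sUnion hs
      exact TopologicalSpace.GenerateOpen.sUnion _ fun t ht =>
        TopologicalSpace.GenerateOpen.basic _ (Or.inr (hS ht))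

/-- In the indiscrete irrational extension of `ℝ`, the rationals form a closed set which is not
`G_δ`; the space is second-countable and submetrizable but not a `G_δ`-space. -/
theorem irrExt_not_gdeltaSpace :
    @IsClosed ℝ irrExtTopology (Set.range ((↑) : ℚ → ℝ)) ∧
    ¬ @IsGδ ℝ irrExtTopology (Set.range ((↑) : ℚ → ℝ)) ∧
    @SecondCountableTopology ℝ irrExtTopology ∧
    (∃ m : TopologicalSpace ℝ, @TopologicalSpace.MetrizableSpace ℝ m ∧ irrExtTopology ≤ m) ∧
    ¬ (∀ C : Set ℝ, @IsClosed ℝ irrExtTopology C → @IsGδ ℝ irrExtTopology C) := by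
  have hJ : {x : ℝ | Irrational x} = (Set.range ((↑) : ℚ → ℝ))ᶜ := rfl
  have hclosed : @IsClosed ℝ irrExtTopology (Set.range ((↑) : ℚ → ℝ)) := by
    letI := irrExtTopology
    rw [← isOpen_compl_iff, ← hJ]
    exact TopologicalSpace.GenerateOpen.basic _ (Or.inl rfl)
  have hnotGδ : ¬ @IsGδ ℝ irrExtTopology (Set.range ((↑) : ℚ → ℝ)) := by
    rintro ⟨T, hTopen, hTcount, hTeq⟩
    have : ∀ t : T, ∃ U : Set ℝ, IsOpen U ∧ U ⊆ (t : Set ℝ) ∧ Dense U := by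
      rintro ⟨t, ht⟩
      obtain ⟨U, hUo, hUt, htU⟩ := irrExt_open_struct (hTopen t ht)
      refine ⟨U, hUo, hUt, ?_⟩
      have hQU : Set.range ((↑) : ℚ → ℝ) ⊆ U := by
        intro x hx
        have hxt : x ∈ t := by
          have : x ∈ ⋂₀ T := hTeq ▸ hx
          exact this t ht
        rcases htU hxt with h | h
        · exact h
        · exact absurd hx h
      exact Rat.denseRange_cast.mono hQU
    choose U hUo hUt hUd using this
    haveI : Countable T := hTcount.to_subtype
    -- the combined family: the U's plus the complements of rational singletons
    set f : T ⊕ ℚ → Set ℝ := fun i => Sum.elim U (fun q => ({(q : ℝ)}ᶜ : Set ℝ)) i with hf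
    have hfo : ∀ i, IsOpen (f i) := by
      rintro (i | q)
      · exact hUo i
      · exact isOpen_compl_singleton
    have hfd : ∀ i, Dense (f i) := by
      rintro (i | q)
      · exact hUd i
      · exact dense_compl_singleton _
    have hdense : Dense (⋂ i, f i) := dense_iInter_of_isOpen hfo hfd
    obtain ⟨x, hx⟩ := hdense.nonempty
    have hxQ : x ∈ Set.range ((↑) : ℚ → ℝ) := by
      rw [hTeq]
      intro t ht
      exact hUt ⟨t, ht⟩ (mem_iInter.1 hx (Sum.inl ⟨t, ht⟩))
    obtain ⟨q, rfl⟩ := hxQ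
    exact (mem_iInter.1 hx (Sum.inr q)) rfl
  have hsc : @SecondCountableTopology ℝ irrExtTopology := by
    letI := irrExtTopology
    have hcount : (insert {x : ℝ | Irrational x}
        (⋃ (a : ℚ) (b : ℚ) (_ : a < b), {Ioo (a : ℝ) b})).Countable := by
      refine Set.Countable.insert _ ?_
      exact Set.countable_iUnion fun a => Set.countable_iUnion fun b =>
        Set.countable_iUnion fun _ => countable_singleton _
    exact (TopologicalSpace.isTopologicalBasis_of_subbasis
      irrExtTopology_eq_countable).secondCountableTopology
      ((countable_setOf_finite_subset hcount).image _)
  have hsub : ∃ m : TopologicalSpace ℝ, @TopologicalSpace.MetrizableSpace ℝ m ∧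
      irrExtTopology ≤ m := by
    refine ⟨inferInstance, inferInstance, ?_⟩
    intro V hV
    exact TopologicalSpace.GenerateOpen.basic _ (Or.inr hV)
  exact ⟨hclosed, hnotGδ, hsc, hsub, fun h => hnotGδ (h _ hclosed)⟩
end

section
/- Let (X, τ) be a topological space, and let D ⊆ X be a τ-dense set such that X ∖ D is τ-dense in some nonempty τ-open set T (i.e., T ⊆ cl_τ(T ∖ D)). Let τ' be the topology generated by τ ∪ {D}. Then (X, τ') is not a regular space: there exists a point x ∈ D ∩ T and a τ'-closed set C = X ∖ D not containing x such that x and C cannot be separated by disjoint τ'-open sets. -/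
lemma extTop_key {X : Type*} (τ : TopologicalSpace X) (D : Set X) :
    ∀ W, TopologicalSpace.GenerateOpen (insert D {U : Set X | @IsOpen X τ U}) W →
      ∀ y ∈ W, ∃ V₀, @IsOpen X τ V₀ ∧ y ∈ V₀ ∧ V₀ ∩ D ⊆ W := by
  letI := τ
  intro W hW
  induction hW with
  | basic s hs =>
    intro y hy
    rcases hs with rfl | hs
    · exact ⟨Set.univ, isOpen_univ, trivial, fun z hz => hz.2⟩
    · exact ⟨s, hs, hy, fun z hz => hz.1⟩
  | univ => exact fun y _ => ⟨Set.univ, isOpen_univ, trivial, fun z _ => trivial⟩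
  | inter s t hs ht ihs iht =>
    intro y hy
    obtain ⟨V₁, h1, hy1, hs1⟩ := ihs y hy.1
    obtain ⟨V₂, h2, hy2, hs2⟩ := iht y hy.2
    exact ⟨V₁ ∩ V₂, h1.inter h2, ⟨hy1, hy2⟩,
      fun z hz => ⟨hs1 ⟨hz.1.1, hz.2⟩, hs2 ⟨hz.1.2, hz.2⟩⟩⟩
  | sUnion S hS ih =>
    intro y hy
    obtain ⟨s, hsS, hys⟩ := hy
    obtain ⟨V₀, h0, hy0, hsub⟩ := ih s hsS y hys
    exact ⟨V₀, h0, hy0, fun z hz => ⟨s, hsS, hsub hz⟩⟩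


/-- The extension of a topology `τ` by a new open set `D`. -/
def extTop {X : Type*} (τ : TopologicalSpace X) (D : Set X) : TopologicalSpace X :=
  TopologicalSpace.generateFrom (insert D {U : Set X | @IsOpen X τ U})

/-- If `D` is `τ`-dense and its complement is `τ`-dense in some nonempty `τ`-open set `T`, then
the extension of `τ` by `D` is not regular: some point of `D ∩ T` cannot be separated from the
closed set `X \ D` by disjoint open sets. -/
theorem extTop_not_regular {X : Type*} (τ : TopologicalSpace X) (D T : Set X)
    (hD : @Dense X τ D) (hT : @IsOpen X τ T) (hTne : T.Nonempty)
    (hcod : T ⊆ @closure X τ (T \ D)) :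
    ∃ x ∈ D ∩ T,
      @IsClosed X (extTop τ D) Dᶜ ∧ x ∉ Dᶜ ∧
      ¬ ∃ U V : Set X, @IsOpen X (extTop τ D) U ∧ @IsOpen X (extTop τ D) V ∧
        x ∈ U ∧ Dᶜ ⊆ V ∧ Disjoint U V := by
  letI := τ
  obtain ⟨x, hxT, hxD⟩ := hD.inter_open_nonempty T hT hTne
  have hDopen : TopologicalSpace.GenerateOpen (insert D {U : Set X | @IsOpen X τ U}) D :=
    TopologicalSpace.GenerateOpen.basic D (Set.mem_insert _ _)
  refine ⟨x, ⟨hxD, hxT⟩, ?_, by simp [hxD], ?_⟩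
  · exact @isClosed_compl_iff X (extTop τ D) D |>.mpr hDopen
  · rintro ⟨U, V, hU, hV, hxU, hDV, hdisj⟩
    obtain ⟨U₀, hU₀, hxU₀, hU₀D⟩ := extTop_key τ D U hU x hxU
    -- find y ∈ U₀ ∩ T with y ∉ D
    have hxcl : x ∈ closure (T \ D) := hcod hxT
    obtain ⟨y, hyU₀, hyT, hyD⟩ :
        ∃ y, y ∈ U₀ ∧ y ∈ T ∧ y ∉ D := by
      obtain ⟨y, hy1, hy2⟩ := (mem_closure_iff.mp hxcl) (U₀ ∩ T) (hU₀.inter hT) ⟨hxU₀, hxT⟩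
      exact ⟨y, hy1.1, hy2.1, hy2.2⟩
    have hyV : y ∈ V := hDV hyD
    obtain ⟨V₀, hV₀, hyV₀, hV₀D⟩ := extTop_key τ D V hV y hyV
    obtain ⟨z, hz1, hz2⟩ := hD.inter_open_nonempty (U₀ ∩ V₀) (hU₀.inter hV₀) ⟨y, hyU₀, hyV₀⟩
    exact Set.disjoint_left.mp hdisj (hU₀D ⟨hz1.1, hz2⟩) (hV₀D ⟨hz1.2, hz2⟩)
end
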